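/- Let M be a graded multiplication R-module and N a proper graded submodule of M. Then N is a graded quasi-semiprime submodule of M if and only if N equals its graded envelope submodule RGE_M(N). -/

import Mathlib

open DirectSum

section Defs

variable {G : Type*} [AddGroup G] [DecidableEq G]
variable {R : Type*} [CommRing R] {M : Type*} [AddCommGroup M] [Module R M]

/-- An ideal is graded if it contains all homogeneous components of its elements. -/
def IsGradedIdeal (𝒜 : G → AddSubgroup R) [GradedRing 𝒜] (I : Ideal R) : Prop :=
  ∀ r ∈ I, ∀ g : G, (DirectSum.decompose 𝒜 r g : R) ∈ I

/-- A submodule is graded if it contains all homogeneous components of its elements. -/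
def IsGradedSubmodule (ℳ : G → AddSubgroup M) [DirectSum.Decomposition ℳ]
    (N : Submodule R M) : Prop :=
  ∀ m ∈ N, ∀ g : G, (DirectSum.decompose ℳ m g : M) ∈ N

/-- A graded semiprime ideal: proper, graded, and r^n*s ∈ I implies r*s ∈ I for homogeneous r,s. -/
def IsGradedSemiprimeIdeal (𝒜 : G → AddSubgroup R) [GradedRing 𝒜] (I : Ideal R) : Prop :=
  I ≠ ⊤ ∧ IsGradedIdeal 𝒜 I ∧
    ∀ r s : R, SetLike.IsHomogeneousElem 𝒜 r → SetLike.IsHomogeneousElem 𝒜 s →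
      ∀ n : ℕ, 0 < n → r ^ n * s ∈ I → r * s ∈ I

/-- A graded prime ideal. -/
def IsGradedPrimeIdeal (𝒜 : G → AddSubgroup R) [GradedRing 𝒜] (I : Ideal R) : Prop :=
  I ≠ ⊤ ∧ IsGradedIdeal 𝒜 I ∧
    ∀ r s : R, SetLike.IsHomogeneousElem 𝒜 r → SetLike.IsHomogeneousElem 𝒜 s →
      r * s ∈ I → r ∈ I ∨ s ∈ I

/-- A graded primary ideal. -/
def IsGradedPrimaryIdeal (𝒜 : G → AddSubgroup R) [GradedRing 𝒜] (I : Ideal R) : Prop :=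
  I ≠ ⊤ ∧ IsGradedIdeal 𝒜 I ∧
    ∀ r s : R, SetLike.IsHomogeneousElem 𝒜 r → SetLike.IsHomogeneousElem 𝒜 s →
      r * s ∈ I → r ∈ I ∨ ∃ n : ℕ, 0 < n ∧ s ^ n ∈ I

/-- A graded maximal ideal: proper graded ideal maximal among proper graded ideals. -/
def IsGradedMaximalIdeal (𝒜 : G → AddSubgroup R) [GradedRing 𝒜] (I : Ideal R) : Prop :=
  I ≠ ⊤ ∧ IsGradedIdeal 𝒜 I ∧
    ∀ J : Ideal R, IsGradedIdeal 𝒜 J → I ≤ J → J ≠ ⊤ → J = I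

/-- A graded semiprime submodule. -/
def IsGradedSemiprimeSubmodule (𝒜 : G → AddSubgroup R) (ℳ : G → AddSubgroup M)
    [DirectSum.Decomposition ℳ] (N : Submodule R M) : Prop :=
  N ≠ ⊤ ∧ IsGradedSubmodule ℳ N ∧
    ∀ (r : R) (m : M), SetLike.IsHomogeneousElem 𝒜 r → SetLike.IsHomogeneousElem ℳ m →
      ∀ n : ℕ, 0 < n → r ^ n • m ∈ N → r • m ∈ N

/-- A graded quasi-semiprime submodule: proper graded submodule whose colon ideal
`(N :_R M)` is a graded semiprime ideal. -/
def IsGradedQuasiSemiprimeSubmodule (𝒜 : G → AddSubgroup R) [GradedRing 𝒜]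
    (ℳ : G → AddSubgroup M) [DirectSum.Decomposition ℳ] (N : Submodule R M) : Prop :=
  N ≠ ⊤ ∧ IsGradedSubmodule ℳ N ∧ IsGradedSemiprimeIdeal 𝒜 (N.colon ⊤)

/-- A graded multiplication module: every graded submodule N equals (N :_R M)M. -/
def IsGradedMultiplicationModule (𝒜 : G → AddSubgroup R) [GradedRing 𝒜]
    (ℳ : G → AddSubgroup M) [DirectSum.Decomposition ℳ] : Prop :=
  ∀ N : Submodule R M, IsGradedSubmodule ℳ N → N = (N.colon ⊤) • (⊤ : Submodule R M)

end Defs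


section Helpers

variable {G : Type*} [AddGroup G] [DecidableEq G]
variable {R : Type*} [CommRing R] {M : Type*} [AddCommGroup M] [Module R M]
variable (𝒜 : G → AddSubgroup R) [GradedRing 𝒜]
variable (ℳ : G → AddSubgroup M) [DirectSum.Decomposition ℳ] [SetLike.GradedSMul 𝒜 ℳ]

lemma decompose_smul_homog (s : R) {x : M} {j : G} (hx : x ∈ ℳ j) (i : G) :
    (decompose ℳ (s • x) (i + j) : M) = (decompose 𝒜 s i : R) • x := by
  classical
  have hmem : ∀ g' : G, ((decompose 𝒜 s g' : R) • x) ∈ ℳ (g' + j) := fun g' => by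
    have := SetLike.GradedSMul.smul_mem (SetLike.coe_mem (decompose 𝒜 s g')) hx
    rwa [vadd_eq_add] at this
  calc (decompose ℳ (s • x) (i + j) : M)
      = ∑ g' ∈ DFinsupp.support (decompose 𝒜 s),
          (decompose ℳ ((decompose 𝒜 s g' : R) • x) (i + j) : M) := by
        conv_lhs => rw [← DirectSum.sum_support_decompose 𝒜 s, Finset.sum_smul,
          decompose_sum]
        rw [DFinsupp.finset_sum_apply]
        push_cast
        rfl
    _ = (decompose 𝒜 s i : R) • x := by
        rw [Finset.sum_eq_single i]
        · exact decompose_of_mem_same ℳ (hmem i)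
        · intro b _ hb
          exact decompose_of_mem_ne ℳ (hmem b) (by
            intro h
            exact hb (by
              have : b + j = i + j := h
              exact add_right_cancel this))
        · intro hi
          have : (decompose 𝒜 s i : R) = 0 := by
            rw [DFinsupp.notMem_support_iff.mp hi]; rfl
          rw [this, zero_smul, decompose_zero]; rfl

lemma colon_graded (N : Submodule R M) (hNg : IsGradedSubmodule ℳ N) :
    IsGradedIdeal 𝒜 (N.colon ⊤) := by
  classical
  intro s hs g
  rw [Submodule.mem_colon] at hs ⊢
  intro x _
  have hx : (decompose 𝒜 s g : R) • x
      = ∑ h ∈ DFinsupp.support (decompose ℳ x),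
          (decompose 𝒜 s g : R) • (decompose ℳ x h : M) := by
    rw [← Finset.smul_sum, DirectSum.sum_support_decompose]
  rw [hx]
  refine Submodule.sum_mem _ fun h _ => ?_
  rw [← decompose_smul_homog 𝒜 ℳ s (SetLike.coe_mem (decompose ℳ x h)) g]
  exact hNg _ (hs _ trivial) (g + h)

include 𝒜 in
lemma span_singleton_graded {m : M} (hm : SetLike.IsHomogeneousElem ℳ m) :
    IsGradedSubmodule ℳ (Submodule.span R {m}) := by
  intro x hx g
  obtain ⟨j, hj⟩ := hm
  obtain ⟨t, rfl⟩ := Submodule.mem_span_singleton.mp hx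
  have hg : g = (g - j) + j := (sub_add_cancel g j).symm
  rw [hg, decompose_smul_homog 𝒜 ℳ t hj]
  exact Submodule.smul_mem _ _ (Submodule.mem_span_singleton_self m)

end Helpers

variable {G : Type*} [AddGroup G] [DecidableEq G]
variable {R : Type*} [CommRing R] {M : Type*} [AddCommGroup M] [Module R M]
variable (𝒜 : G → AddSubgroup R) [GradedRing 𝒜]
variable (ℳ : G → AddSubgroup M) [DirectSum.Decomposition ℳ] [SetLike.GradedSMul 𝒜 ℳ]

theorem stmt6 (hM : IsGradedMultiplicationModule 𝒜 ℳ) (N : Submodule R M) (hNt : N ≠ ⊤)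
    (hNg : IsGradedSubmodule ℳ N) :
    IsGradedQuasiSemiprimeSubmodule 𝒜 ℳ N ↔
      N = Submodule.span R {x : M | ∃ (r : R) (m : M), SetLike.IsHomogeneousElem 𝒜 r ∧
        SetLike.IsHomogeneousElem ℳ m ∧ (∃ n : ℕ, 0 < n ∧ r ^ n • m ∈ N) ∧ x = r • m} := by
  classical
  constructor
  · rintro ⟨-, -, -, -, hsp⟩
    refine le_antisymm ?_ (Submodule.span_le.mpr ?_)
    · -- N ≤ span S
      intro x hx
      rw [← DirectSum.sum_support_decompose ℳ x]
      refine Submodule.sum_mem _ fun g _ => Submodule.subset_span ?_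
      exact ⟨1, (decompose ℳ x g : M), SetLike.isHomogeneousElem_one 𝒜,
        ⟨g, SetLike.coe_mem _⟩, ⟨1, one_pos, by simpa using hNg x hx g⟩,
        (one_smul _ _).symm⟩
    · rintro x ⟨r, m, hr, hm, ⟨n, hn, hrnm⟩, rfl⟩
      have hPg := span_singleton_graded 𝒜 ℳ hm
      have hJg := colon_graded 𝒜 ℳ (Submodule.span R {m}) hPg
      set J := (Submodule.span R {m}).colon ⊤ with hJ
      have hPeq : Submodule.span R {m} = J • (⊤ : Submodule R M) :=
        hM (Submodule.span R {m}) hPg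
      have key : ∀ s ∈ J, r * s ∈ N.colon ⊤ := by
        intro s hsJ
        rw [← DirectSum.sum_support_decompose 𝒜 s, Finset.mul_sum]
        refine Submodule.sum_mem _ fun g _ => ?_
        have hsg : (decompose 𝒜 s g : R) ∈ J := hJg s hsJ g
        have hrn : r ^ n * (decompose 𝒜 s g : R) ∈ N.colon ⊤ := by
          rw [Submodule.mem_colon]
          intro p _
          have hp : (decompose 𝒜 s g : R) • p ∈ Submodule.span R {m} :=
            Submodule.mem_colon.mp hsg p trivial
          obtain ⟨t, ht⟩ := Submodule.mem_span_singleton.mp hp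
          rw [mul_smul, ← ht, smul_comm]
          exact Submodule.smul_mem _ _ hrnm
        exact hsp r _ hr ⟨g, SetLike.coe_mem _⟩ n hn hrn
      have hmJ : m ∈ J • (⊤ : Submodule R M) :=
        hPeq ▸ Submodule.mem_span_singleton_self m
      refine Submodule.smul_induction_on (p := fun z => r • z ∈ N) hmJ ?_ ?_
      · intro s hs x _
        rw [← mul_smul]
        exact Submodule.mem_colon.mp (key s hs) x trivial
      · intro x y hx hy
        rw [smul_add]
        exact N.add_mem hx hy
  · intro hEq
    refine ⟨hNt, hNg, ?_, colon_graded 𝒜 ℳ N hNg, ?_⟩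
    · intro h
      apply hNt
      rw [eq_top_iff]
      intro x _
      have h1 : (1 : R) ∈ N.colon ⊤ := h ▸ Submodule.mem_top
      simpa using Submodule.mem_colon.mp h1 x trivial
    · intro r s hr hs n hn hrns
      rw [Submodule.mem_colon]
      intro x _
      have hx : (r * s) • x = ∑ g ∈ DFinsupp.support (decompose ℳ x),
          (r * s) • (decompose ℳ x g : M) := by
        rw [← Finset.smul_sum, DirectSum.sum_support_decompose]
      rw [hx, hEq]
      refine Submodule.sum_mem _ fun g _ => Submodule.subset_span ?_
      refine ⟨r, s • (decompose ℳ x g : M), hr,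
        SetLike.IsHomogeneousElem.graded_smul hs ⟨g, SetLike.coe_mem _⟩,
        ⟨n, hn, ?_⟩, by rw [mul_smul]⟩
      rw [← mul_smul]
      exact Submodule.mem_colon.mp hrns _ trivial
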